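/- Let n ≥ 2, let θ : Fin n → ℝ, and let π be a random permutation of {1,…,n} distributed according to the Plackett-Luce distribution with logits θ. Then for any distinct indices i, j, conditioned on the event that the first-ranked item π_1 is neither i nor j, the probability that i precedes j equals exp(θ_i)/(exp(θ_i)+exp(θ_j)); moreover the probability that π_1 ∉ {i, j} equals (Z − exp(θ_i) − exp(θ_j))/Z, where Z = Σ_{k=1}^n exp(θ_k). -/

import Mathlib

open Finset

/-- The Plackett-Luce probability of a permutation `π` of `{1,…,n}` with logits
`θ` (where `π k` is the item ranked at position `k`, so `π ⟨0,_⟩` is the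
first-ranked item). -/
noncomputable def plackettLuce {n : ℕ} (θ : Fin n → ℝ) (π : Equiv.Perm (Fin n)) : ℝ :=
  ∏ k : Fin n,
    Real.exp (θ (π k)) / ∑ u ∈ Finset.univ.filter (fun u => k ≤ u), Real.exp (θ (π u))

lemma PLaux.filter_succ_le {n : ℕ} (k : Fin n) :
    (Finset.univ.filter (fun u : Fin (n+1) => k.succ ≤ u))
      = (Finset.univ.filter (fun u : Fin n => k ≤ u)).map
          ⟨Fin.succ, Fin.succ_injective n⟩ := by
  ext u
  simp only [mem_filter, mem_univ, true_and, Finset.mem_map, Function.Embedding.coeFn_mk]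
  constructor
  · intro hu
    have hu0 : u ≠ 0 := by
      intro h; subst h; exact absurd hu (by simp [Fin.le_def])
    obtain ⟨v, rfl⟩ := Fin.exists_succ_eq.mpr hu0
    exact ⟨v, by simpa [Fin.succ_le_succ_iff] using hu, rfl⟩
  · rintro ⟨v, hv, rfl⟩
    simpa [Fin.succ_le_succ_iff] using hv

lemma PLaux.pl_decompose {n : ℕ} (θ : Fin (n+1) → ℝ) (p : Fin (n+1)) (e : Equiv.Perm (Fin n)) :
    plackettLuce θ (Equiv.Perm.decomposeFin.symm (p, e))
      = (Real.exp (θ p) / ∑ k : Fin (n+1), Real.exp (θ k))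
          * plackettLuce (fun k => θ (Equiv.swap 0 p k.succ)) e := by
  set π := Equiv.Perm.decomposeFin.symm (p, e) with hπ
  unfold plackettLuce
  rw [Fin.prod_univ_succ]
  congr 1
  · have h1 : (Finset.univ.filter (fun u : Fin (n+1) => (0:Fin (n+1)) ≤ u)) = Finset.univ := by
      simp [Fin.zero_le]
    rw [h1]
    have h2 : ∑ u : Fin (n+1), Real.exp (θ (π u)) = ∑ k : Fin (n+1), Real.exp (θ k) :=
      Equiv.sum_comp π (fun k => Real.exp (θ k))
    rw [h2]
    simp [hπ]
  · apply Finset.prod_congr rfl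
    intro k _
    have hnum : θ (π k.succ) = θ (Equiv.swap 0 p (e k).succ) := by
      simp [hπ]
    rw [hnum, PLaux.filter_succ_le, Finset.sum_map]
    simp only [Function.Embedding.coeFn_mk]
    congr 1
    apply Finset.sum_congr rfl
    intro u _
    simp [hπ]

lemma PLaux.Zpos {n : ℕ} (θ : Fin (n+1) → ℝ) : 0 < ∑ k : Fin (n+1), Real.exp (θ k) :=
  Finset.sum_pos (fun k _ => Real.exp_pos _) ⟨0, mem_univ _⟩

lemma PLaux.pl_norm : ∀ (n : ℕ) (θ : Fin n → ℝ),
    ∑ π : Equiv.Perm (Fin n), plackettLuce θ π = 1 := by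
  intro n
  induction n with
  | zero => intro θ; simp [plackettLuce]
  | succ n ih =>
    intro θ
    rw [← Equiv.sum_comp (Equiv.Perm.decomposeFin (n := n)).symm, Fintype.sum_prod_type]
    have : ∀ p : Fin (n+1),
        (∑ e : Equiv.Perm (Fin n), plackettLuce θ (Equiv.Perm.decomposeFin.symm (p, e)))
        = Real.exp (θ p) / ∑ k : Fin (n+1), Real.exp (θ k) := by
      intro p
      simp only [PLaux.pl_decompose, ← Finset.mul_sum, ih]
      ring
    simp only [this, ← Finset.sum_div]
    exact div_self (ne_of_gt (PLaux.Zpos θ))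

lemma PLaux.swap_ne_zero {n : ℕ} {p i : Fin (n+1)} (hi : i ≠ p) : Equiv.swap 0 p i ≠ 0 := by
  intro h
  exact hi ((Equiv.swap 0 p).injective (h.trans (Equiv.swap_apply_right 0 p).symm))

lemma PLaux.symm_eq {n : ℕ} (p : Fin (n+1)) (e : Equiv.Perm (Fin n)) (i : Fin (n+1))
    (hi : i ≠ p) :
    (Equiv.Perm.decomposeFin.symm (p, e)).symm i
      = (e.symm ((Equiv.swap 0 p i).pred (PLaux.swap_ne_zero hi))).succ := by
  rw [Equiv.symm_apply_eq]
  rw [Equiv.Perm.decomposeFin_symm_apply_succ]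
  rw [Equiv.apply_symm_apply, Fin.succ_pred]
  exact (Equiv.swap_apply_self 0 p i).symm

lemma PLaux.symm_lt_iff {n : ℕ} (p : Fin (n+1)) (e : Equiv.Perm (Fin n)) (i j : Fin (n+1))
    (hi : i ≠ p) (hj : j ≠ p) :
    ((Equiv.Perm.decomposeFin.symm (p, e)).symm i < (Equiv.Perm.decomposeFin.symm (p, e)).symm j)
      ↔ (e.symm ((Equiv.swap 0 p i).pred (PLaux.swap_ne_zero hi))
          < e.symm ((Equiv.swap 0 p j).pred (PLaux.swap_ne_zero hj))) := by
  rw [PLaux.symm_eq p e i hi, PLaux.symm_eq p e j hj, Fin.succ_lt_succ_iff]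

lemma PLaux.theta'_eval {n : ℕ} (θ : Fin (n+1) → ℝ) (p i : Fin (n+1)) (hi : i ≠ p) :
    θ (Equiv.swap 0 p ((Equiv.swap 0 p i).pred (PLaux.swap_ne_zero hi)).succ) = θ i := by
  rw [Fin.succ_pred, Equiv.swap_apply_self]

lemma PLaux.pred_swap_ne {n : ℕ} {p i j : Fin (n+1)} (hi : i ≠ p) (hj : j ≠ p) (hij : i ≠ j) :
    ((Equiv.swap 0 p i).pred (PLaux.swap_ne_zero hi))
      ≠ ((Equiv.swap 0 p j).pred (PLaux.swap_ne_zero hj)) := by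
  intro h
  apply hij
  have := congrArg Fin.succ h
  rw [Fin.succ_pred, Fin.succ_pred] at this
  exact (Equiv.swap 0 p).injective this

lemma PLaux.sum_ite_or {α : Type*} [Fintype α] [DecidableEq α] (i j : α) (c : α → ℝ) :
    ∑ p : α, (if p = i ∨ p = j then 0 else c p) = ∑ p ∈ Finset.univ \ {i, j}, c p := by
  rw [← Finset.sum_sdiff (Finset.subset_univ ({i, j} : Finset α))]
  have h1 : ∑ p ∈ ({i, j} : Finset α), (if p = i ∨ p = j then 0 else c p) = 0 := by
    refine Finset.sum_eq_zero fun p hp => ?_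
    simp only [Finset.mem_insert, Finset.mem_singleton] at hp
    rw [if_pos hp]
  have h2 : ∑ p ∈ Finset.univ \ ({i, j} : Finset α), (if p = i ∨ p = j then 0 else c p)
      = ∑ p ∈ Finset.univ \ ({i, j} : Finset α), c p := by
    refine Finset.sum_congr rfl fun p hp => ?_
    simp only [Finset.mem_sdiff, Finset.mem_insert, Finset.mem_singleton, not_or] at hp
    rw [if_neg (by tauto)]
  rw [h1, h2, add_zero]

lemma PLaux.sdiff_exp {n : ℕ} (θ : Fin (n+1) → ℝ) (i j : Fin (n+1)) (hij : i ≠ j) :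
    ∑ p ∈ Finset.univ \ ({i, j} : Finset (Fin (n+1))), Real.exp (θ p)
      = (∑ k : Fin (n+1), Real.exp (θ k)) - Real.exp (θ i) - Real.exp (θ j) := by
  have h := Finset.sum_sdiff (f := fun p => Real.exp (θ p))
    (Finset.subset_univ ({i, j} : Finset (Fin (n+1))))
  rw [Finset.sum_pair hij] at h
  linarith

lemma PLaux.pl_pairwise : ∀ (n : ℕ) (θ : Fin n → ℝ) (i j : Fin n), i ≠ j →
    (∑ π ∈ Finset.univ.filter (fun π : Equiv.Perm (Fin n) => π.symm i < π.symm j),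
        plackettLuce θ π)
      = Real.exp (θ i) / (Real.exp (θ i) + Real.exp (θ j)) := by
  intro n
  induction n with
  | zero => intro θ i j hij; exact absurd (Subsingleton.elim i j) hij
  | succ n ih =>
    intro θ i j hij
    set Z := ∑ k : Fin (n+1), Real.exp (θ k) with hZ
    set B := Real.exp (θ i) / (Real.exp (θ i) + Real.exp (θ j)) with hB
    rw [Finset.sum_filter]
    rw [← Equiv.sum_comp (Equiv.Perm.decomposeFin (n := n)).symm
        (fun π => if π.symm i < π.symm j then plackettLuce θ π else 0), Fintype.sum_prod_type]
    have key : ∀ p : Fin (n+1),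
        (∑ e : Equiv.Perm (Fin n),
          if (Equiv.Perm.decomposeFin.symm (p, e)).symm i
              < (Equiv.Perm.decomposeFin.symm (p, e)).symm j
          then plackettLuce θ (Equiv.Perm.decomposeFin.symm (p, e)) else 0)
        = if p = i then Real.exp (θ i) / Z else if p = j then 0
          else Real.exp (θ p) / Z * B := by
      intro p
      by_cases hpi : p = i
      · subst hpi
        rw [if_pos rfl]
        have hjp : j ≠ p := Ne.symm hij
        have hcond : ∀ e : Equiv.Perm (Fin n),
            (Equiv.Perm.decomposeFin.symm (p, e)).symm p
              < (Equiv.Perm.decomposeFin.symm (p, e)).symm j := by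
          intro e
          have h0 : (Equiv.Perm.decomposeFin.symm (p, e)).symm p = 0 := by
            rw [Equiv.symm_apply_eq]; exact (Equiv.Perm.decomposeFin_symm_apply_zero p e).symm
          rw [h0, PLaux.symm_eq p e j hjp]
          exact Fin.succ_pos _
        calc (∑ e : Equiv.Perm (Fin n),
              if (Equiv.Perm.decomposeFin.symm (p, e)).symm p
                  < (Equiv.Perm.decomposeFin.symm (p, e)).symm j
              then plackettLuce θ (Equiv.Perm.decomposeFin.symm (p, e)) else 0)
            = ∑ e : Equiv.Perm (Fin n), (Real.exp (θ p) / Z)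
                * plackettLuce (fun k => θ (Equiv.swap 0 p k.succ)) e := by
                  refine Finset.sum_congr rfl (fun e _ => ?_)
                  rw [if_pos (hcond e), PLaux.pl_decompose]
          _ = Real.exp (θ p) / Z := by
                  rw [← Finset.mul_sum, PLaux.pl_norm, mul_one]
      · rw [if_neg hpi]
        by_cases hpj : p = j
        · subst hpj
          rw [if_pos rfl]
          refine Finset.sum_eq_zero (fun e _ => ?_)
          rw [if_neg]
          have h0 : (Equiv.Perm.decomposeFin.symm (p, e)).symm p = 0 := by
            rw [Equiv.symm_apply_eq]; exact (Equiv.Perm.decomposeFin_symm_apply_zero p e).symm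
          rw [h0]
          exact Fin.not_lt_zero _
        · rw [if_neg hpj]
          have hip : i ≠ p := Ne.symm hpi
          have hjp : j ≠ p := Ne.symm hpj
          calc (∑ e : Equiv.Perm (Fin n),
              if (Equiv.Perm.decomposeFin.symm (p, e)).symm i
                  < (Equiv.Perm.decomposeFin.symm (p, e)).symm j
              then plackettLuce θ (Equiv.Perm.decomposeFin.symm (p, e)) else 0)
            = ∑ e : Equiv.Perm (Fin n),
                if e.symm ((Equiv.swap 0 p i).pred (PLaux.swap_ne_zero hip))
                    < e.symm ((Equiv.swap 0 p j).pred (PLaux.swap_ne_zero hjp))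
                then (Real.exp (θ p) / Z)
                  * plackettLuce (fun k => θ (Equiv.swap 0 p k.succ)) e else 0 := by
                  refine Finset.sum_congr rfl (fun e _ => ?_)
                  rw [PLaux.pl_decompose]
                  exact if_congr (PLaux.symm_lt_iff p e i j hip hjp) rfl rfl
          _ = (Real.exp (θ p) / Z) * ∑ e ∈ Finset.univ.filter
                (fun e : Equiv.Perm (Fin n) =>
                  e.symm ((Equiv.swap 0 p i).pred (PLaux.swap_ne_zero hip))
                    < e.symm ((Equiv.swap 0 p j).pred (PLaux.swap_ne_zero hjp))),
                plackettLuce (fun k => θ (Equiv.swap 0 p k.succ)) e := by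
                  rw [Finset.sum_filter, Finset.mul_sum]
                  refine Finset.sum_congr rfl (fun e _ => ?_)
                  rw [mul_ite, mul_zero]
          _ = Real.exp (θ p) / Z * B := by
                  rw [ih _ _ _ (PLaux.pred_swap_ne hip hjp hij), PLaux.theta'_eval θ p i hip,
                    PLaux.theta'_eval θ p j hjp]
    rw [Finset.sum_congr rfl (fun p _ => key p)]
    rw [← Finset.sum_sdiff (Finset.subset_univ ({i, j} : Finset (Fin (n+1))))]
    have h1 : (∑ p ∈ ({i, j} : Finset (Fin (n+1))),
        if p = i then Real.exp (θ i) / Z else if p = j then 0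
          else Real.exp (θ p) / Z * B) = Real.exp (θ i) / Z := by
      rw [Finset.sum_pair hij, if_pos rfl, if_neg (Ne.symm hij), if_pos rfl, add_zero]
    have h2 : (∑ p ∈ Finset.univ \ ({i, j} : Finset (Fin (n+1))),
        if p = i then Real.exp (θ i) / Z else if p = j then 0
          else Real.exp (θ p) / Z * B)
        = (Z - (Real.exp (θ i) + Real.exp (θ j))) / Z * B := by
      have h3 : (∑ p ∈ Finset.univ \ ({i, j} : Finset (Fin (n+1))),
          if p = i then Real.exp (θ i) / Z else if p = j then 0
            else Real.exp (θ p) / Z * B)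
          = ∑ p ∈ Finset.univ \ ({i, j} : Finset (Fin (n+1))),
              Real.exp (θ p) / Z * B := by
        refine Finset.sum_congr rfl (fun p hp => ?_)
        simp only [Finset.mem_sdiff, Finset.mem_insert, Finset.mem_singleton, not_or] at hp
        rw [if_neg hp.2.1, if_neg hp.2.2]
      rw [h3]
      have h4 : ∑ p ∈ Finset.univ \ ({i, j} : Finset (Fin (n+1))), Real.exp (θ p)
          = Z - (Real.exp (θ i) + Real.exp (θ j)) := by
        have h := PLaux.sdiff_exp θ i j hij
        rw [← hZ] at h
        linarith
      calc ∑ p ∈ Finset.univ \ ({i, j} : Finset (Fin (n+1))), Real.exp (θ p) / Z * B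
          = (∑ p ∈ Finset.univ \ ({i, j} : Finset (Fin (n+1))), Real.exp (θ p)) / Z * B := by
            rw [Finset.sum_div, Finset.sum_mul]
        _ = (Z - (Real.exp (θ i) + Real.exp (θ j))) / Z * B := by rw [h4]
    rw [h1, h2, hB]
    have hZ0 : Z ≠ 0 := ne_of_gt (PLaux.Zpos θ)
    have hs : Real.exp (θ i) + Real.exp (θ j) ≠ 0 := ne_of_gt (by positivity)
    field_simp
    ring

/-- Conditioned on the first-ranked item `π_1` being neither `i` nor `j`, the
probability that `i` precedes `j` equals `e^{θ_i}/(e^{θ_i}+e^{θ_j})`; stated in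
product form, `Pr(π_1 ∉ {i,j} ∧ i ≺ j) = Pr(π_1 ∉ {i,j}) · e^{θ_i}/(e^{θ_i}+e^{θ_j})`.
Moreover `Pr(π_1 ∉ {i,j}) = (Z − e^{θ_i} − e^{θ_j})/Z` with `Z = Σ_k e^{θ_k}`. -/
theorem plackettLuce_precedes_given_first_not_ij {n : ℕ} (hn : 2 ≤ n)
    (θ : Fin n → ℝ) (i j : Fin n) (hij : i ≠ j) :
    (∑ π ∈ Finset.univ.filter
        (fun π : Equiv.Perm (Fin n) =>
          π ⟨0, by omega⟩ ≠ i ∧ π ⟨0, by omega⟩ ≠ j ∧ π.symm i < π.symm j),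
        plackettLuce θ π)
      = (∑ π ∈ Finset.univ.filter
          (fun π : Equiv.Perm (Fin n) => π ⟨0, by omega⟩ ≠ i ∧ π ⟨0, by omega⟩ ≠ j),
          plackettLuce θ π)
        * (Real.exp (θ i) / (Real.exp (θ i) + Real.exp (θ j)))
    ∧ (∑ π ∈ Finset.univ.filter
          (fun π : Equiv.Perm (Fin n) => π ⟨0, by omega⟩ ≠ i ∧ π ⟨0, by omega⟩ ≠ j),
          plackettLuce θ π)
      = ((∑ k : Fin n, Real.exp (θ k)) - Real.exp (θ i) - Real.exp (θ j))
          / ∑ k : Fin n, Real.exp (θ k) := by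
  obtain ⟨m, rfl⟩ : ∃ m, n = m + 1 := ⟨n - 1, by omega⟩
  simp only [Fin.mk_zero]
  set Z := ∑ k : Fin (m+1), Real.exp (θ k) with hZ
  set B := Real.exp (θ i) / (Real.exp (θ i) + Real.exp (θ j)) with hB
  have hZ0 : Z ≠ 0 := ne_of_gt (PLaux.Zpos θ)
  have hS2 : (∑ π ∈ Finset.univ.filter
      (fun π : Equiv.Perm (Fin (m+1)) => π 0 ≠ i ∧ π 0 ≠ j), plackettLuce θ π)
      = (Z - Real.exp (θ i) - Real.exp (θ j)) / Z := by
    rw [Finset.sum_filter]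
    rw [← Equiv.sum_comp (Equiv.Perm.decomposeFin (n := m)).symm
        (fun π => if π 0 ≠ i ∧ π 0 ≠ j then plackettLuce θ π else 0), Fintype.sum_prod_type]
    have key : ∀ p : Fin (m+1),
        (∑ e : Equiv.Perm (Fin m),
          if (Equiv.Perm.decomposeFin.symm (p, e)) 0 ≠ i
              ∧ (Equiv.Perm.decomposeFin.symm (p, e)) 0 ≠ j
          then plackettLuce θ (Equiv.Perm.decomposeFin.symm (p, e)) else 0)
        = if p = i ∨ p = j then 0 else Real.exp (θ p) / Z := by
      intro p
      by_cases hp : p = i ∨ p = j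
      · rw [if_pos hp]
        refine Finset.sum_eq_zero fun e _ => ?_
        rw [if_neg]
        simp only [Equiv.Perm.decomposeFin_symm_apply_zero]
        tauto
      · rw [if_neg hp]
        push_neg at hp
        calc (∑ e : Equiv.Perm (Fin m),
            if (Equiv.Perm.decomposeFin.symm (p, e)) 0 ≠ i
                ∧ (Equiv.Perm.decomposeFin.symm (p, e)) 0 ≠ j
            then plackettLuce θ (Equiv.Perm.decomposeFin.symm (p, e)) else 0)
            = ∑ e : Equiv.Perm (Fin m), (Real.exp (θ p) / Z)
                * plackettLuce (fun k => θ (Equiv.swap 0 p k.succ)) e := by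
                  refine Finset.sum_congr rfl fun e _ => ?_
                  rw [if_pos, PLaux.pl_decompose]
                  simp only [Equiv.Perm.decomposeFin_symm_apply_zero]
                  exact ⟨hp.1, hp.2⟩
          _ = Real.exp (θ p) / Z := by rw [← Finset.mul_sum, PLaux.pl_norm, mul_one]
    rw [Finset.sum_congr rfl (fun p _ => key p), PLaux.sum_ite_or i j]
    rw [← Finset.sum_div, PLaux.sdiff_exp θ i j hij]
  refine ⟨?_, hS2⟩
  show (∑ π ∈ Finset.univ.filter (fun π : Equiv.Perm (Fin (m+1)) =>
      π 0 ≠ i ∧ π 0 ≠ j ∧ π.symm i < π.symm j), plackettLuce θ π)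
    = (∑ π ∈ Finset.univ.filter (fun π : Equiv.Perm (Fin (m+1)) => π 0 ≠ i ∧ π 0 ≠ j),
      plackettLuce θ π) * B
  rw [hS2]
  rw [Finset.sum_filter]
  rw [← Equiv.sum_comp (Equiv.Perm.decomposeFin (n := m)).symm
      (fun π => if π 0 ≠ i ∧ π 0 ≠ j ∧ π.symm i < π.symm j then plackettLuce θ π else 0),
      Fintype.sum_prod_type]
  have key : ∀ p : Fin (m+1),
      (∑ e : Equiv.Perm (Fin m),
        if (Equiv.Perm.decomposeFin.symm (p, e)) 0 ≠ i
            ∧ (Equiv.Perm.decomposeFin.symm (p, e)) 0 ≠ j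
            ∧ (Equiv.Perm.decomposeFin.symm (p, e)).symm i
                < (Equiv.Perm.decomposeFin.symm (p, e)).symm j
        then plackettLuce θ (Equiv.Perm.decomposeFin.symm (p, e)) else 0)
      = if p = i ∨ p = j then 0 else Real.exp (θ p) / Z * B := by
    intro p
    by_cases hp : p = i ∨ p = j
    · rw [if_pos hp]
      refine Finset.sum_eq_zero fun e _ => ?_
      rw [if_neg]
      simp only [Equiv.Perm.decomposeFin_symm_apply_zero]
      tauto
    · rw [if_neg hp]
      push_neg at hp
      have hip : i ≠ p := Ne.symm hp.1
      have hjp : j ≠ p := Ne.symm hp.2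
      calc (∑ e : Equiv.Perm (Fin m),
          if (Equiv.Perm.decomposeFin.symm (p, e)) 0 ≠ i
              ∧ (Equiv.Perm.decomposeFin.symm (p, e)) 0 ≠ j
              ∧ (Equiv.Perm.decomposeFin.symm (p, e)).symm i
                  < (Equiv.Perm.decomposeFin.symm (p, e)).symm j
          then plackettLuce θ (Equiv.Perm.decomposeFin.symm (p, e)) else 0)
          = ∑ e : Equiv.Perm (Fin m),
              if e.symm ((Equiv.swap 0 p i).pred (PLaux.swap_ne_zero hip))
                  < e.symm ((Equiv.swap 0 p j).pred (PLaux.swap_ne_zero hjp))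
              then (Real.exp (θ p) / Z)
                * plackettLuce (fun k => θ (Equiv.swap 0 p k.succ)) e else 0 := by
                refine Finset.sum_congr rfl fun e _ => ?_
                rw [PLaux.pl_decompose]
                refine if_congr ?_ rfl rfl
                simp only [Equiv.Perm.decomposeFin_symm_apply_zero]
                constructor
                · intro h
                  exact (PLaux.symm_lt_iff p e i j hip hjp).mp h.2.2
                · intro h
                  exact ⟨hp.1, hp.2, (PLaux.symm_lt_iff p e i j hip hjp).mpr h⟩
        _ = (Real.exp (θ p) / Z) * ∑ e ∈ Finset.univ.filter
              (fun e : Equiv.Perm (Fin m) =>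
                e.symm ((Equiv.swap 0 p i).pred (PLaux.swap_ne_zero hip))
                  < e.symm ((Equiv.swap 0 p j).pred (PLaux.swap_ne_zero hjp))),
              plackettLuce (fun k => θ (Equiv.swap 0 p k.succ)) e := by
                rw [Finset.sum_filter, Finset.mul_sum]
                refine Finset.sum_congr rfl fun e _ => ?_
                rw [mul_ite, mul_zero]
        _ = Real.exp (θ p) / Z * B := by
                rw [PLaux.pl_pairwise _ _ _ _ (PLaux.pred_swap_ne hip hjp hij),
                  PLaux.theta'_eval θ p i hip, PLaux.theta'_eval θ p j hjp]
  rw [Finset.sum_congr rfl (fun p _ => key p), PLaux.sum_ite_or i j]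
  have : ∑ p ∈ Finset.univ \ ({i, j} : Finset (Fin (m+1))), Real.exp (θ p) / Z * B
      = (∑ p ∈ Finset.univ \ ({i, j} : Finset (Fin (m+1))), Real.exp (θ p)) / Z * B := by
    rw [Finset.sum_div, Finset.sum_mul]
  rw [this, PLaux.sdiff_exp θ i j hij]
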